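/- Let σ be a partition sampled uniformly at random from Π_n, let r = r(n) be the unique positive real root of r·e^r = n, and let λ = n/r = e^r. Then for every fixed ε > 0 there exists n₀ such that for all n ≥ n₀: P( | |σ| − λ | ≥ ε·λ ) < n·e^{−n(ε − ln(1+ε))}, where |σ| denotes the number of parts of σ. Equivalently, the number of partitions π ∈ Π_n with | |π| − λ | ≥ ε·λ is less than B_n · n·e^{−n(ε − ln(1+ε))}. -/

import Mathlib

open scoped Classical

noncomputable section

/-- the `n`-th Bell number: the number of partitions of `{1,…,n}` -/
def bell (n : ℕ) : ℕ := Nat.card (Finpartition (Finset.univ : Finset (Fin n)))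

open Finset

noncomputable section

variable {α : Type*} [Fintype α] [DecidableEq α]

lemma parts_eq_image_part (P : Finpartition (univ : Finset α)) :
    P.parts = univ.image P.part := by
  ext t
  constructor
  · intro ht
    obtain ⟨x, hx, hxt⟩ := P.part_surjOn ht
    exact Finset.mem_image.2 ⟨x, Finset.mem_univ _, hxt⟩
  · intro ht
    obtain ⟨x, -, rfl⟩ := Finset.mem_image.1 ht
    exact P.part_mem.2 (Finset.mem_univ _)

lemma finpartition_eq_of_part_eq {P Q : Finpartition (univ : Finset α)}
    (h : ∀ a, P.part a = Q.part a) : P = Q := by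
  ext1
  rw [parts_eq_image_part, parts_eq_image_part]
  exact Finset.image_congr fun a _ => h a

/-- the fiber partition of a function -/
def fiberPart (f : α → β) : Finpartition (univ : Finset α) :=
  Finpartition.ofSetoid (Setoid.ker f)

lemma mem_fiberPart_part {f : α → β} {a b : α} :
    b ∈ (fiberPart f).part a ↔ f a = f b :=
  Finpartition.mem_part_ofSetoid_iff_rel

end
noncomputable section
open Function

variable {n k m : ℕ}

/-- canonical labeling of a partition with k parts -/
def plabel (π : Finpartition (univ : Finset (Fin n))) (hπ : π.parts.card = k) :
    Fin n → Fin k := fun x =>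
  finCongr hπ (π.parts.equivFin ⟨π.part x, π.part_mem.2 (mem_univ x)⟩)

lemma plabel_surjective (π : Finpartition (univ : Finset (Fin n))) (hπ : π.parts.card = k) :
    Surjective (plabel π hπ) := by
  intro j
  set S := π.parts.equivFin.symm ((finCongr hπ).symm j) with hSdef
  obtain ⟨x, hx⟩ := π.nonempty_of_mem_parts S.2
  refine ⟨x, ?_⟩
  have hpart : π.part x = S.1 := π.part_eq_of_mem S.2 hx
  simp only [plabel]
  have : (⟨π.part x, π.part_mem.2 (mem_univ x)⟩ : {t // t ∈ π.parts}) = S :=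
    Subtype.ext hpart
  rw [this, hSdef]
  simp

lemma fiberPart_comp_plabel {β : Type*} (π : Finpartition (univ : Finset (Fin n)))
    (hπ : π.parts.card = k) {g : Fin k → β} (hg : Injective g) :
    fiberPart (fun x => g (plabel π hπ x)) = π := by
  apply finpartition_eq_of_part_eq
  intro a
  ext b
  rw [mem_fiberPart_part]
  have : g (plabel π hπ a) = g (plabel π hπ b) ↔ π.part a = π.part b := by
    constructor
    · intro h
      have h2 := hg h
      simp only [plabel] at h2
      have h3 := (finCongr hπ).injective h2
      have h4 := π.parts.equivFin.injective h3
      exact congrArg Subtype.val h4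
    · intro h; simp only [plabel, h]
  rw [this]
  rw [π.mem_part_iff_part_eq_part (mem_univ b) (mem_univ a)]
  exact eq_comm

lemma card_parts_mul_factorial_le (n k : ℕ) :
    Nat.card {π : Finpartition (univ : Finset (Fin n)) // π.parts.card = k} * k.factorial
      ≤ k ^ n := by
  classical
  have key : Function.Injective
      (fun p : {π : Finpartition (univ : Finset (Fin n)) // π.parts.card = k} × Equiv.Perm (Fin k)
        => fun x => p.2 (plabel p.1.1 p.1.2 x)) := by
    rintro ⟨⟨π, hπ⟩, σ⟩ ⟨⟨ρ, hρ⟩, τ⟩ h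
    have hπρ : π = ρ := by
      have h1 := fiberPart_comp_plabel π hπ σ.injective
      have h2 := fiberPart_comp_plabel ρ hρ τ.injective
      rw [← h1, ← h2]
      exact congrArg _ h
    subst hπρ
    have hστ : σ = τ := by
      apply Equiv.ext
      intro j
      obtain ⟨x, rfl⟩ := plabel_surjective π hπ j
      have := congrFun h x
      simpa using this
    simp [hστ]
  have hcard := Fintype.card_le_of_injective _ key
  simp only [Fintype.card_prod, Fintype.card_perm, Fintype.card_fun, Fintype.card_fin] at hcard
  calc Nat.card {π : Finpartition (univ : Finset (Fin n)) // π.parts.card = k} * k.factorial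
      = Fintype.card {π : Finpartition (univ : Finset (Fin n)) // π.parts.card = k}
        * Fintype.card (Equiv.Perm (Fin k)) := by
        rw [Nat.card_eq_fintype_card, Fintype.card_perm, Fintype.card_fin]
    _ ≤ k ^ n := by rw [← Fintype.card_prod]; simpa using Fintype.card_le_of_injective _ key

end
noncomputable section
open Function

/-- a canonical element of each part -/
def ppick {n : ℕ} (π : Finpartition (univ : Finset (Fin n))) (B : Finset (Fin n))
    (hB : B ∈ π.parts) : Fin n := (π.nonempty_of_mem_parts hB).choose

lemma ppick_mem {n : ℕ} (π : Finpartition (univ : Finset (Fin n))) (B : Finset (Fin n))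
    (hB : B ∈ π.parts) : ppick π B hB ∈ B := (π.nonempty_of_mem_parts hB).choose_spec

lemma descFactorial_le_factorial (m j : ℕ) : m.descFactorial j ≤ m.factorial := by
  rcases le_or_gt j m with h | h
  · calc m.descFactorial j ≤ (m - j).factorial * m.descFactorial j :=
        Nat.le_mul_of_pos_left _ (Nat.factorial_pos _)
    _ = m.factorial := Nat.factorial_mul_descFactorial h
  · rw [Nat.descFactorial_of_lt h]; exact Nat.zero_le _

def fiberEmb (f : Fin n → Fin m) : {B // B ∈ (fiberPart f).parts} ↪ Fin m where
  toFun := fun B => f (ppick (fiberPart f) B.1 B.2)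
  inj' := by
    intro B B' hBB'
    apply Subtype.ext
    have h1 : ppick (fiberPart f) B'.1 B'.2 ∈
        (fiberPart f).part (ppick (fiberPart f) B.1 B.2) := by
      rw [mem_fiberPart_part]; exact hBB'
    have h2 : (fiberPart f).part (ppick (fiberPart f) B.1 B.2) = B.1 :=
      (fiberPart f).part_eq_of_mem B.2 (ppick_mem _ _ _)
    rw [h2] at h1
    exact (fiberPart f).eq_of_mem_parts B.2 B'.2 h1 (ppick_mem _ _ _)

lemma fiberEmb_spec (f : Fin n → Fin m) (x : Fin n) :
    f x = fiberEmb f ⟨(fiberPart f).part x, (fiberPart f).part_mem.2 (mem_univ x)⟩ := by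
  show f x = f (ppick (fiberPart f) _ _)
  exact mem_fiberPart_part.1 (ppick_mem (fiberPart f) ((fiberPart f).part x)
    ((fiberPart f).part_mem.2 (mem_univ x)))

lemma pow_le_bell_mul_factorial (n m : ℕ) :
    m ^ n ≤ bell n * m.factorial := by
  classical
  set Sig := Σ π : Finpartition (univ : Finset (Fin n)), ({B // B ∈ π.parts} ↪ Fin m) with hSig
  set G : Sig → (Fin n → Fin m) :=
    fun p x => p.2 ⟨p.1.part x, p.1.part_mem.2 (mem_univ x)⟩ with hG
  have hinj : Function.Injective (fun f : Fin n → Fin m => (⟨fiberPart f, fiberEmb f⟩ : Sig)) := by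
    have hleft : ∀ f : Fin n → Fin m, G ⟨fiberPart f, fiberEmb f⟩ = f := by
      intro f; funext x; exact (fiberEmb_spec f x).symm
    intro f f' h
    simp only at h
    rw [← hleft f, ← hleft f', h]
  have hcard := Fintype.card_le_of_injective _ hinj
  rw [Fintype.card_fun, Fintype.card_fin, Fintype.card_fin, Fintype.card_sigma] at hcard
  refine hcard.trans ?_
  have : ∀ π : Finpartition (univ : Finset (Fin n)),
      Fintype.card ({B // B ∈ π.parts} ↪ Fin m) ≤ m.factorial := by
    intro π
    rw [Fintype.card_embedding_eq, Fintype.card_fin]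
    exact descFactorial_le_factorial _ _
  calc ∑ π : Finpartition (univ : Finset (Fin n)), Fintype.card ({B // B ∈ π.parts} ↪ Fin m)
      ≤ ∑ _π : Finpartition (univ : Finset (Fin n)), m.factorial :=
        Finset.sum_le_sum fun π _ => this π
    _ = bell n * m.factorial := by
        rw [Finset.sum_const, Finset.card_univ, smul_eq_mul, bell, Nat.card_eq_fintype_card]

end
noncomputable section

lemma bell_pos (n : ℕ) : 0 < bell n := by
  have : Nonempty (Finpartition (univ : Finset (Fin n))) := ⟨⊥⟩
  exact Nat.card_pos

lemma card_parts_zero (n : ℕ) (hn : 1 ≤ n) :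
    Nat.card {π : Finpartition (univ : Finset (Fin n)) // π.parts.card = 0} = 0 := by
  have : IsEmpty {π : Finpartition (univ : Finset (Fin n)) // π.parts.card = 0} := by
    constructor
    rintro ⟨π, hπ⟩
    rw [Finset.card_eq_zero, Finpartition.parts_eq_empty_iff] at hπ
    have : (⟨0, hn⟩ : Fin n) ∈ (univ : Finset (Fin n)) := mem_univ _
    rw [hπ] at this
    simp at this
  exact Nat.card_of_isEmpty

lemma card_subtype_le_sum (n : ℕ) (Q : ℕ → Prop) :
    Nat.card {π : Finpartition (univ : Finset (Fin n)) // Q π.parts.card}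
      ≤ ∑ k ∈ Finset.range (n + 1),
          if Q k then
            Nat.card {π : Finpartition (univ : Finset (Fin n)) // π.parts.card = k} else 0 := by
  classical
  rw [Nat.card_eq_fintype_card, Fintype.card_subtype]
  rw [Finset.card_eq_sum_card_fiberwise
    (f := fun π : Finpartition (univ : Finset (Fin n)) => π.parts.card)
    (t := Finset.range (n + 1)) ?_]
  · apply Finset.sum_le_sum
    intro k _
    by_cases hQ : Q k
    · simp only [hQ, if_true]
      rw [Nat.card_eq_fintype_card, Fintype.card_subtype]
      apply Finset.card_le_card
      intro π hπ
      simp only [Finset.mem_filter] at hπ ⊢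
      exact ⟨mem_univ _, hπ.2⟩
    · simp only [hQ, if_false, Finset.card_eq_zero, Nat.le_zero]
      rw [Finset.eq_empty_iff_forall_notMem]
      intro π hπ
      simp only [Finset.mem_filter] at hπ
      exact hQ (hπ.2 ▸ hπ.1.2)
  · intro π _
    rw [Finset.mem_coe, Finset.mem_range, Nat.lt_succ_iff]
    exact (π.card_parts_le_card).trans (by simp)

end
noncomputable section

def Gfun (x : ℝ) : ℝ := x * Real.log x - x

def hfun (N x : ℝ) : ℝ := N * Real.log x - Gfun x

lemma Gfun_step_le {x : ℝ} (hx : 1 ≤ x) : Gfun (x + 1) - Gfun x ≤ Real.log (x + 1) := by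
  have h0 : (0:ℝ) < x := lt_of_lt_of_le one_pos hx
  have h1 : Real.log (x + 1) - Real.log x ≤ 1 / x := by
    rw [← Real.log_div (by positivity) (ne_of_gt h0)]
    calc Real.log ((x+1)/x) ≤ (x+1)/x - 1 := Real.log_le_sub_one_of_pos (by positivity)
      _ = 1 / x := by field_simp; ring
  have h2 : x * (Real.log (x+1) - Real.log x) ≤ 1 := by
    calc x * (Real.log (x+1) - Real.log x) ≤ x * (1/x) := by
          exact mul_le_mul_of_nonneg_left h1 (le_of_lt h0)
      _ = 1 := by field_simp
  simp only [Gfun]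
  nlinarith [h2]

lemma Gfun_step_ge {x : ℝ} (hx : 1 ≤ x) : Real.log x ≤ Gfun (x + 1) - Gfun x := by
  have h0 : (0:ℝ) < x := lt_of_lt_of_le one_pos hx
  have h1 : 1 / (x+1) ≤ Real.log (x + 1) - Real.log x := by
    rw [← Real.log_div (by positivity) (ne_of_gt h0)]
    have := Real.one_sub_inv_le_log_of_pos (x := (x+1)/x) (by positivity)
    have hinv : ((x+1)/x)⁻¹ = x / (x+1) := by field_simp
    rw [hinv] at this
    calc 1/(x+1) = 1 - x/(x+1) := by field_simp; ring
      _ ≤ Real.log ((x+1)/x) := this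
  have h2 : 1 ≤ (x+1) * (Real.log (x+1) - Real.log x) := by
    calc (1:ℝ) = (x+1) * (1/(x+1)) := by field_simp
      _ ≤ (x+1) * (Real.log (x+1) - Real.log x) := by
          exact mul_le_mul_of_nonneg_left h1 (by positivity)
  simp only [Gfun]
  nlinarith [h2]

lemma logfact_ge (m : ℕ) (hm : 1 ≤ m) : ∀ k, m ≤ k →
    Gfun k - Gfun m ≤ Real.log (Nat.factorial k) - Real.log (Nat.factorial m) := by
  intro k hk
  induction k, hk using Nat.le_induction with
  | base => simp
  | succ k hk IH =>
    have hk1 : (1:ℝ) ≤ (k:ℝ) := by exact_mod_cast hm.trans hk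
    have hstep := Gfun_step_le hk1
    have hfac : Real.log (Nat.factorial (k+1)) =
        Real.log ((k:ℝ) + 1) + Real.log (Nat.factorial k) := by
      rw [Nat.factorial_succ]
      push_cast
      rw [Real.log_mul (by positivity) (by positivity)]
    have hcast : ((k+1 : ℕ) : ℝ) = (k:ℝ) + 1 := by push_cast; ring
    rw [hcast, hfac]
    linarith [IH]

lemma logfact_le (k : ℕ) (hk : 1 ≤ k) : ∀ m, k ≤ m →
    Real.log (Nat.factorial m) - Real.log (Nat.factorial k) ≤
      Gfun ((m:ℝ) + 1) - Gfun ((k:ℝ) + 1) := by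
  intro m hm
  induction m, hm using Nat.le_induction with
  | base => simp
  | succ m hm IH =>
    have hm1 : (1:ℝ) ≤ (m:ℝ) + 1 := by
      have : (0:ℝ) ≤ (m:ℝ) := Nat.cast_nonneg m
      linarith
    have hstep := Gfun_step_ge hm1
    have hfac : Real.log (Nat.factorial (m+1)) =
        Real.log ((m:ℝ) + 1) + Real.log (Nat.factorial m) := by
      rw [Nat.factorial_succ]
      push_cast
      rw [Real.log_mul (by positivity) (by positivity)]
    have hcast : ((m+1 : ℕ) : ℝ) = (m:ℝ) + 1 := by push_cast; ring
    rw [hcast, hfac]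
    linarith [IH]

lemma hfun_hasDerivAt (N : ℝ) {x : ℝ} (hx : 0 < x) :
    HasDerivAt (hfun N) (N / x - Real.log x) x := by
  have h1 : HasDerivAt Real.log x⁻¹ x := Real.hasDerivAt_log (ne_of_gt hx)
  have h2 : HasDerivAt (fun y : ℝ => y * Real.log y) (Real.log x + 1) x := by
    have := (hasDerivAt_id x).mul h1
    refine this.congr_deriv ?_
    simp [hx.ne']
  have h3 : HasDerivAt (fun y : ℝ => N * Real.log y) (N * x⁻¹) x := h1.const_mul N
  have h4 := h3.sub (h2.sub (hasDerivAt_id x))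
  refine h4.congr_deriv ?_
  rw [div_eq_mul_inv]
  ring

lemma hfun_mono (N lam : ℝ) (hN : N = lam * Real.log lam) (hlam : 1 ≤ lam)
    {x y : ℝ} (hx : 0 < x) (hxy : x ≤ y) (hy : y ≤ lam) : hfun N x ≤ hfun N y := by
  have hlam0 : (0:ℝ) < lam := lt_of_lt_of_le one_pos hlam
  have hNpos : 0 ≤ N := by
    rw [hN]; exact mul_nonneg (by linarith) (Real.log_nonneg hlam)
  have hNlam : N / lam = Real.log lam := by
    rw [hN]; field_simp
  have key : MonotoneOn (hfun N) (Set.Icc x lam) := by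
    apply monotoneOn_of_deriv_nonneg (convex_Icc x lam)
    · intro z hz
      exact (hfun_hasDerivAt N (lt_of_lt_of_le hx hz.1)).continuousAt.continuousWithinAt
    · intro z hz
      rw [interior_Icc] at hz
      exact (hfun_hasDerivAt N (hx.trans hz.1)).differentiableAt.differentiableWithinAt
    · intro z hz
      rw [interior_Icc] at hz
      have hz0 : 0 < z := hx.trans hz.1
      rw [(hfun_hasDerivAt N hz0).deriv]
      have h1 : Real.log z ≤ Real.log lam := Real.log_le_log hz0 hz.2.le
      have h2 : N / lam ≤ N / z := div_le_div_of_nonneg_left hNpos hz0 hz.2.le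
      linarith [hNlam ▸ h2]
  exact key ⟨le_rfl, hxy.trans hy⟩ ⟨hxy, hy⟩ hxy

lemma hfun_anti (N lam : ℝ) (hN : N = lam * Real.log lam) (hlam : 1 ≤ lam)
    {x y : ℝ} (hx : lam ≤ x) (hxy : x ≤ y) : hfun N y ≤ hfun N x := by
  have hlam0 : (0:ℝ) < lam := lt_of_lt_of_le one_pos hlam
  have hNpos : 0 ≤ N := by
    rw [hN]; exact mul_nonneg (by linarith) (Real.log_nonneg hlam)
  have hNlam : N / lam = Real.log lam := by
    rw [hN]; field_simp
  have key : AntitoneOn (hfun N) (Set.Icc lam y) := by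
    apply antitoneOn_of_deriv_nonpos (convex_Icc lam y)
    · intro z hz
      exact (hfun_hasDerivAt N (lt_of_lt_of_le hlam0 hz.1)).continuousAt.continuousWithinAt
    · intro z hz
      rw [interior_Icc] at hz
      exact (hfun_hasDerivAt N (hlam0.trans hz.1)).differentiableAt.differentiableWithinAt
    · intro z hz
      rw [interior_Icc] at hz
      have hz0 : 0 < z := hlam0.trans hz.1
      rw [(hfun_hasDerivAt N hz0).deriv]
      have h1 : Real.log lam ≤ Real.log z := Real.log_le_log hlam0 hz.1.le
      have h2 : N / z ≤ N / lam := div_le_div_of_nonneg_left hNpos hlam0 hz.1.le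
      linarith [hNlam ▸ h2]
  exact key ⟨hx, hxy⟩ ⟨hx.trans hxy, le_rfl⟩ hxy

lemma hfun_identity (N lam c : ℝ) (hN : N = lam * Real.log lam) (hlam : 0 < lam) (hc : 0 < c) :
    hfun N (c * lam) - hfun N lam =
      -(N * (c - 1 - Real.log c)) - lam * (c * Real.log c - (c - 1)) := by
  simp only [hfun, Gfun]
  rw [Real.log_mul (ne_of_gt hc) (ne_of_gt hlam), hN]
  ring

lemma hfun_ceil (N lam m : ℝ) (hN : N = lam * Real.log lam) (hlam : 1 ≤ lam)
    (hm1 : lam ≤ m) (hm2 : m ≤ lam + 1) : hfun N lam - hfun N m ≤ Real.log m := by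
  have hlam0 : (0:ℝ) < lam := lt_of_lt_of_le one_pos hlam
  have hm0 : (0:ℝ) < m := lt_of_lt_of_le hlam0 hm1
  have hNpos : 0 ≤ N := by
    rw [hN]; exact mul_nonneg (by linarith) (Real.log_nonneg hlam)
  have hloglam : Real.log lam ≤ Real.log m := Real.log_le_log hlam0 hm1
  have hlogm : 0 ≤ Real.log m := Real.log_nonneg (hlam.trans hm1)
  have h1 : N * Real.log lam - N * Real.log m ≤ 0 := by nlinarith
  have h2 : lam - m ≤ lam * Real.log lam - lam * Real.log m := by
    have := Real.one_sub_inv_le_log_of_pos (x := lam / m) (by positivity)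
    have hinv : (lam/m)⁻¹ = m / lam := by field_simp
    rw [hinv, Real.log_div (ne_of_gt hlam0) (ne_of_gt hm0)] at this
    have h3 : lam * (1 - m/lam) ≤ lam * (Real.log lam - Real.log m) :=
      mul_le_mul_of_nonneg_left this (le_of_lt hlam0)
    have h4 : lam * (1 - m/lam) = lam - m := by field_simp
    nlinarith [h3]
  -- Gfun m - Gfun lam ≤ (m - lam) * log m ≤ log m
  have h5 : Gfun m - Gfun lam ≤ (m - lam) * Real.log m := by
    simp only [Gfun]
    nlinarith [h2]
  have h6 : (m - lam) * Real.log m ≤ Real.log m := by nlinarith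
  simp only [hfun]
  linarith

lemma C_pos {e : ℝ} (he : 0 < e) : 0 < e - Real.log (1 + e) := by
  have := Real.log_lt_sub_one_of_pos (x := 1 + e) (by linarith) (by linarith)
  linarith

lemma A_pos {e : ℝ} (he : 0 < e) : 0 < (1 + e) * Real.log (1 + e) - e := by
  have h1 : (0:ℝ) < 1 + e := by linarith
  have := Real.log_lt_sub_one_of_pos (x := (1+e)⁻¹) (by positivity)
    (by
      intro h
      have : (1:ℝ) + e = 1 := by
        field_simp at h
        linarith
      linarith)
  rw [Real.log_inv] at this
  have h2 : (1+e)⁻¹ - 1 = -(e/(1+e)) := by field_simp; ring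
  rw [h2] at this
  have h3 : e / (1+e) < Real.log (1+e) := by linarith
  have h4 : (1+e) * (e/(1+e)) < (1+e) * Real.log (1+e) :=
    mul_lt_mul_of_pos_left h3 h1
  have h5 : (1+e) * (e/(1+e)) = e := by field_simp
  linarith

lemma B_pos {e : ℝ} (he : 0 < e) (he1 : e < 1) : 0 < e + (1 - e) * Real.log (1 - e) := by
  have h1 : (0:ℝ) < 1 - e := by linarith
  have := Real.log_lt_sub_one_of_pos (x := (1-e)⁻¹) (by positivity)
    (by
      intro h
      have : (1:ℝ) - e = 1 := by
        field_simp at h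
        linarith
      linarith)
  rw [Real.log_inv] at this
  have h2 : (1-e)⁻¹ - 1 = e/(1-e) := by field_simp; ring
  rw [h2] at this
  have h3 : (1-e) * (-Real.log (1-e)) < (1-e) * (e/(1-e)) :=
    mul_lt_mul_of_pos_left this h1
  have h4 : (1-e) * (e/(1-e)) = e := by field_simp
  nlinarith [h3]

lemma DC_ineq {e : ℝ} (he : 0 < e) (he1 : e < 1) :
    2 * e ≤ Real.log (1 + e) - Real.log (1 - e) := by
  set F : ℝ → ℝ := fun t => Real.log (1 + t) - Real.log (1 - t) - 2 * t with hF
  have key : MonotoneOn F (Set.Icc 0 e) := by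
    apply monotoneOn_of_deriv_nonneg (convex_Icc 0 e)
    · intro z hz
      have hz1 : (0:ℝ) < 1 + z := by
        have := hz.1; linarith
      have hz2 : (0:ℝ) < 1 - z := by
        have := hz.2; linarith
      have hd := ((((hasDerivAt_id z).const_add 1).log (ne_of_gt hz1)).sub
        (((hasDerivAt_id z).const_sub 1).log (ne_of_gt hz2))).sub
        ((hasDerivAt_id z).const_mul 2)
      exact hd.continuousAt.continuousWithinAt
    · intro z hz
      rw [interior_Icc] at hz
      have hz1 : (0:ℝ) < 1 + z := by linarith [hz.1]
      have hz2 : (0:ℝ) < 1 - z := by linarith [hz.2]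
      have hd := ((((hasDerivAt_id z).const_add 1).log (ne_of_gt hz1)).sub
        (((hasDerivAt_id z).const_sub 1).log (ne_of_gt hz2))).sub
        ((hasDerivAt_id z).const_mul 2)
      exact hd.differentiableAt.differentiableWithinAt
    · intro z hz
      rw [interior_Icc] at hz
      have hz1 : (0:ℝ) < 1 + z := by linarith [hz.1]
      have hz2 : (0:ℝ) < 1 - z := by linarith [hz.2]
      have hd := ((((hasDerivAt_id z).const_add 1).log (ne_of_gt hz1)).sub
        (((hasDerivAt_id z).const_sub 1).log (ne_of_gt hz2))).sub
        ((hasDerivAt_id z).const_mul 2)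
      have hd' : HasDerivAt F (1 / (1 + z) - -1 / (1 - z) - 2 * 1) z := hd
      rw [hd'.deriv]
      have : 1 / (1 + z) - -1 / (1 - z) - 2 * 1 = 2 * z^2 / ((1+z)*(1-z)) := by
        field_simp
        ring
      rw [this]
      positivity
  have h0 : F 0 = 0 := by simp [hF]
  have he' : F 0 ≤ F e := key ⟨le_rfl, le_of_lt he⟩ ⟨le_of_lt he, le_rfl⟩ (le_of_lt he)
  rw [h0] at he'
  simp only [hF] at he'
  linarith

end
noncomputable section

lemma perk (n k m : ℕ) (r e : ℝ) (he : 0 < e) (hr : 1 ≤ r)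
    (hn : r * Real.exp r = (n : ℝ))
    (hm : m = ⌈Real.exp r⌉₊)
    (hk1 : 1 ≤ k)
    (hk : e * Real.exp r ≤ |(k:ℝ) - Real.exp r|)
    (bigeps : 1 ≤ e * Real.exp r)
    (big1 : Real.log (Real.exp r + 1) + Real.log (2*((n:ℝ)+1))
      ≤ ((1+e) * Real.log (1+e) - e) * Real.exp r)
    (big2 : e < 1 → Real.log (Real.exp r + 1) + Real.log (Real.exp r + 2) + Real.log (2*((n:ℝ)+1))
      ≤ (e + (1-e) * Real.log (1-e)) * Real.exp r) :
    (k:ℝ)^n / (Nat.factorial k : ℝ) * ((Nat.factorial m : ℝ) / (m:ℝ)^n)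
      ≤ Real.exp (-((n:ℝ)*(e - Real.log (1+e)))) / (2*((n:ℝ)+1)) := by
  set lam := Real.exp r with hlamdef
  have hlam1 : 1 ≤ lam := by
    rw [hlamdef]
    calc (1:ℝ) = Real.exp 0 := (Real.exp_zero).symm
    _ ≤ Real.exp r := Real.exp_le_exp.2 (by linarith)
  have hlam0 : (0:ℝ) < lam := lt_of_lt_of_le one_pos hlam1
  have hloglam : Real.log lam = r := Real.log_exp r
  have hN : (n:ℝ) = lam * Real.log lam := by
    rw [hloglam]; linarith [hn]
  have hm1 : lam ≤ (m:ℝ) := by rw [hm]; exact_mod_cast Nat.le_ceil lam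
  have hm2 : (m:ℝ) ≤ lam + 1 := by
    rw [hm]; exact le_of_lt (Nat.ceil_lt_add_one (le_of_lt hlam0))
  have hmnat : 1 ≤ m := by
    by_contra hcon
    push_neg at hcon
    interval_cases m
    · simp at hm1; linarith
  have hk0 : (0:ℝ) < (k:ℝ) := by exact_mod_cast hk1
  have hk1' : (1:ℝ) ≤ (k:ℝ) := by exact_mod_cast hk1
  have hm0 : (0:ℝ) < (m:ℝ) := lt_of_lt_of_le hlam0 hm1
  have hn0 : (0:ℝ) ≤ (n:ℝ) := Nat.cast_nonneg n
  have hfk : (0:ℝ) < (Nat.factorial k : ℝ) := by exact_mod_cast Nat.factorial_pos k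
  have hfm : (0:ℝ) < (Nat.factorial m : ℝ) := by exact_mod_cast Nat.factorial_pos m
  have hLpos : (0:ℝ) < (k:ℝ)^n / (Nat.factorial k : ℝ) * ((Nat.factorial m : ℝ) / (m:ℝ)^n) := by
    positivity
  have hRpos : (0:ℝ) < Real.exp (-((n:ℝ)*(e - Real.log (1+e)))) / (2*((n:ℝ)+1)) := by
    positivity
  rw [← Real.log_le_log_iff hLpos hRpos]
  have hlogL : Real.log ((k:ℝ)^n / (Nat.factorial k : ℝ) * ((Nat.factorial m : ℝ) / (m:ℝ)^n))
      = (n:ℝ) * Real.log k - Real.log (Nat.factorial k)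
        + (Real.log (Nat.factorial m) - (n:ℝ) * Real.log m) := by
    rw [Real.log_mul (by positivity) (by positivity),
      Real.log_div (by positivity) (by positivity),
      Real.log_div (by positivity) (by positivity),
      Real.log_pow, Real.log_pow]
  have hlogR : Real.log (Real.exp (-((n:ℝ)*(e - Real.log (1+e)))) / (2*((n:ℝ)+1)))
      = -((n:ℝ)*(e - Real.log (1+e))) - Real.log (2*((n:ℝ)+1)) := by
    rw [Real.log_div (by positivity) (by positivity), Real.log_exp]
  rw [hlogL, hlogR]
  have hceil : hfun (n:ℝ) lam - hfun (n:ℝ) (m:ℝ) ≤ Real.log (lam + 1) := by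
    have := hfun_ceil (n:ℝ) lam (m:ℝ) hN hlam1 hm1 hm2
    have hlogm : Real.log (m:ℝ) ≤ Real.log (lam + 1) := Real.log_le_log hm0 hm2
    linarith
  rcases le_or_gt lam (k:ℝ) with hcase | hcase
  · -- upper tail
    have habs : |(k:ℝ) - lam| = (k:ℝ) - lam := abs_of_nonneg (by linarith)
    rw [habs] at hk
    have hkup : (1+e) * lam ≤ (k:ℝ) := by linarith only [hk]
    have hmk : (m:ℝ) ≤ (k:ℝ) := by linarith only [bigeps, hm2, hkup]
    have hmknat : m ≤ k := by exact_mod_cast hmk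
    have hlf := logfact_ge m hmnat k hmknat
    have h1 : hfun (n:ℝ) (k:ℝ) ≤ hfun (n:ℝ) ((1+e) * lam) :=
      hfun_anti (n:ℝ) lam hN hlam1 (by linarith only [mul_pos he hlam0]) hkup
    have h3 := hfun_identity (n:ℝ) lam (1+e) hN hlam0 (by linarith)
    have hmain : (n:ℝ) * Real.log k - Real.log (Nat.factorial k)
        + (Real.log (Nat.factorial m) - (n:ℝ) * Real.log m)
        ≤ hfun (n:ℝ) (k:ℝ) - hfun (n:ℝ) (m:ℝ) := by
      simp only [hfun]
      linarith only [hlf]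
    have hA : Real.log (lam + 1) + Real.log (2*((n:ℝ)+1))
        ≤ ((1+e) * Real.log (1+e) - e) * lam := big1
    simp only [hfun] at h1 h3 hmain hceil
    linarith only [hmain, h1, h3, hceil, hA]
  · -- lower tail
    have habs : |(k:ℝ) - lam| = lam - (k:ℝ) := by
      rw [abs_of_nonpos (by linarith)]; ring
    rw [habs] at hk
    have hkdn : (k:ℝ) ≤ (1-e) * lam := by linarith only [hk]
    have he1 : e < 1 := by
      have h15 : (0:ℝ) < (1-e) * lam := lt_of_lt_of_le hk0 hkdn
      rcases mul_pos_iff.mp h15 with ⟨ha, _⟩ | ⟨_, hb⟩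
      · linarith only [ha]
      · linarith only [hb, hlam0]
    have hkm : (k:ℝ) ≤ (m:ℝ) := by
      linarith only [hkdn, hm1, mul_nonneg he.le hlam0.le]
    have hkmnat : k ≤ m := by exact_mod_cast hkm
    have hlf := logfact_le k hk1 m hkmnat
    have hstep1 : Gfun ((m:ℝ)+1) - Gfun (m:ℝ) ≤ Real.log ((m:ℝ)+1) :=
      Gfun_step_le (by linarith)
    have hstep2 : Real.log (k:ℝ) ≤ Gfun ((k:ℝ)+1) - Gfun (k:ℝ) :=
      Gfun_step_ge hk1'
    have hlogk : (0:ℝ) ≤ Real.log (k:ℝ) := Real.log_nonneg hk1'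
    have h1 : hfun (n:ℝ) (k:ℝ) ≤ hfun (n:ℝ) ((1-e) * lam) :=
      hfun_mono (n:ℝ) lam hN hlam1 hk0 hkdn
        (by linarith only [mul_nonneg he.le hlam0.le])
    have h3 := hfun_identity (n:ℝ) lam (1-e) hN hlam0 (by linarith)
    have hDC := DC_ineq he he1
    have hD : (n:ℝ) * (e - Real.log (1+e)) ≤ (n:ℝ) * (-e - Real.log (1-e)) := by
      apply mul_le_mul_of_nonneg_left _ hn0
      linarith
    have hlogm1 : Real.log ((m:ℝ)+1) ≤ Real.log (lam + 2) := by
      apply Real.log_le_log (by positivity) (by linarith)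
    have hmain : (n:ℝ) * Real.log k - Real.log (Nat.factorial k)
        + (Real.log (Nat.factorial m) - (n:ℝ) * Real.log m)
        ≤ hfun (n:ℝ) (k:ℝ) - hfun (n:ℝ) (m:ℝ) + Real.log (lam + 2) := by
      simp only [hfun]
      linarith only [hlf, hstep1, hstep2, hlogk, hlogm1]
    have hB : Real.log (lam + 1) + Real.log (lam + 2) + Real.log (2*((n:ℝ)+1))
        ≤ (e + (1-e) * Real.log (1-e)) * lam := big2 he1
    simp only [hfun] at h1 h3 hmain hceil
    linarith only [hmain, h1, h3, hceil, hB, hD]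

end
noncomputable section

lemma exists_r0 (e A B : ℝ) (he : 0 < e) (hA : 0 < A) (hB : 0 < B) :
    ∃ r0 : ℝ, 1 ≤ r0 ∧ ∀ r, r0 ≤ r →
      1 ≤ e * Real.exp r ∧ 12/A * r ≤ Real.exp r ∧ 15/B * r ≤ Real.exp r := by
  have h1 : ∀ᶠ r in Filter.atTop, 1 ≤ e * Real.exp r :=
    (Real.tendsto_exp_atTop.const_mul_atTop he).eventually_ge_atTop 1
  have hdiv : Filter.Tendsto (fun r : ℝ => Real.exp r / r ^ 1) Filter.atTop Filter.atTop :=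
    Real.tendsto_exp_div_pow_atTop 1
  have h2 : ∀ᶠ r in Filter.atTop, 12/A ≤ Real.exp r / r ^ 1 := hdiv.eventually_ge_atTop _
  have h3 : ∀ᶠ r in Filter.atTop, 15/B ≤ Real.exp r / r ^ 1 := hdiv.eventually_ge_atTop _
  have h4 : ∀ᶠ r in Filter.atTop, (1:ℝ) ≤ r := Filter.eventually_ge_atTop 1
  obtain ⟨r0, hr0⟩ := Filter.eventually_atTop.1 (((h1.and h2).and h3).and h4)
  refine ⟨max r0 1, le_max_right _ _, ?_⟩
  intro r hr
  obtain ⟨⟨⟨c1, c2⟩, c3⟩, c4⟩ := hr0 r ((le_max_left _ _).trans hr)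
  have hrpos : (0:ℝ) < r := lt_of_lt_of_le one_pos c4
  rw [pow_one] at c2 c3
  exact ⟨c1, (le_div_iff₀ hrpos).1 c2, (le_div_iff₀ hrpos).1 c3⟩

lemma bigs (A B r : ℝ) (hr : 1 ≤ r) (hApos : 0 < A) (hBpos : 0 < B)
    (h12 : 12/A * r ≤ Real.exp r) (h15 : 15/B * r ≤ Real.exp r) :
    Real.log (Real.exp r + 1) + Real.log (2*(r * Real.exp r + 1)) ≤ A * Real.exp r ∧
    Real.log (Real.exp r + 1) + Real.log (Real.exp r + 2) + Real.log (2*(r * Real.exp r + 1))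
      ≤ B * Real.exp r := by
  have hrpos : (0:ℝ) < r := lt_of_lt_of_le one_pos hr
  have her : 1 ≤ Real.exp r := by
    rw [← Real.exp_zero]; exact Real.exp_le_exp.2 (by linarith)
  have herpos : (0:ℝ) < Real.exp r := Real.exp_pos r
  have hlog2 : Real.log 2 ≤ 1 := by
    have := Real.log_le_sub_one_of_pos (x := 2) (by norm_num); linarith
  have hlog3 : Real.log 3 ≤ 2 := by
    have := Real.log_le_sub_one_of_pos (x := 3) (by norm_num); linarith
  have hlog4 : Real.log 4 ≤ 3 := by
    have := Real.log_le_sub_one_of_pos (x := 4) (by norm_num); linarith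
  have hlogr : Real.log r ≤ r - 1 := Real.log_le_sub_one_of_pos hrpos
  have l1 : Real.log (Real.exp r + 1) ≤ 1 + r := by
    have h := Real.log_le_log (by positivity) (show Real.exp r + 1 ≤ 2 * Real.exp r by linarith)
    rw [Real.log_mul (by norm_num) (ne_of_gt herpos), Real.log_exp] at h
    linarith
  have hre : 1 ≤ r * Real.exp r := by nlinarith
  have l2 : Real.log (2*(r * Real.exp r + 1)) ≤ 2*r + 2 := by
    have h := Real.log_le_log (by positivity)
      (show 2*(r * Real.exp r + 1) ≤ 4 * (r * Real.exp r) by linarith)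
    have hA4 : Real.log (4 * (r * Real.exp r)) = Real.log 4 + (Real.log r + r) := by
      rw [Real.log_mul (by norm_num) (by positivity),
        Real.log_mul (ne_of_gt hrpos) (ne_of_gt herpos), Real.log_exp]
    rw [hA4] at h
    linarith
  have l3 : Real.log (Real.exp r + 2) ≤ 2 + r := by
    have h := Real.log_le_log (by positivity) (show Real.exp r + 2 ≤ 3 * Real.exp r by linarith)
    rw [Real.log_mul (by norm_num) (ne_of_gt herpos), Real.log_exp] at h
    linarith
  have h12' : 12 * r ≤ A * Real.exp r := by
    have := mul_le_mul_of_nonneg_left h12 hApos.le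
    have e1 : A * (12/A*r) = 12 * r := by field_simp
    linarith [e1 ▸ this]
  have h15' : 15 * r ≤ B * Real.exp r := by
    have := mul_le_mul_of_nonneg_left h15 hBpos.le
    have e1 : B * (15/B*r) = 15 * r := by field_simp
    linarith [e1 ▸ this]
  constructor
  · linarith
  · linarith

end

/-- Concentration of the number of parts of a uniformly random partition of `{1,…,n}`:
if `r·e^r = n` and `λ = n/r`, then `P(| |σ| − λ | ≥ ελ) < n·e^{−n(ε − ln(1+ε))}`. -/
theorem random_partition_parts_concentration :
    ∀ ε : ℝ, 0 < ε → ∃ n₀ : ℕ, ∀ n : ℕ, n₀ ≤ n → ∀ r : ℝ, 0 < r →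
      r * Real.exp r = (n : ℝ) →
      (Nat.card {π : Finpartition (Finset.univ : Finset (Fin n)) //
          ε * ((n : ℝ) / r) ≤ |(π.parts.card : ℝ) - (n : ℝ) / r|} : ℝ) / (bell n : ℝ) <
        (n : ℝ) * Real.exp (-((n : ℝ) * (ε - Real.log (1 + ε)))) := by
  intro ε hε
  have hApos : 0 < (1+ε) * Real.log (1+ε) - ε := A_pos hε
  set B : ℝ := if ε < 1 then ε + (1-ε) * Real.log (1-ε) else 1 with hBdef
  have hBpos : 0 < B := by
    rw [hBdef]
    split_ifs with h1
    · exact B_pos hε h1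
    · norm_num
  obtain ⟨r0, hr01, hr0⟩ := exists_r0 ε ((1+ε) * Real.log (1+ε) - ε) B hε hApos hBpos
  refine ⟨max 1 ⌈r0 * Real.exp r0⌉₊, ?_⟩
  intro n hn r hrpos hrn
  have hn1 : 1 ≤ n := le_trans (le_max_left _ _) hn
  have hn1' : (1:ℝ) ≤ (n:ℝ) := by exact_mod_cast hn1
  have hrr0 : r0 ≤ r := by
    by_contra hcon
    push_neg at hcon
    have hr0pos : (0:ℝ) < r0 := lt_of_lt_of_le one_pos hr01
    have hlt : r * Real.exp r < r0 * Real.exp r0 := by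
      have h1 : Real.exp r < Real.exp r0 := Real.exp_lt_exp.2 hcon
      have h2 : (0:ℝ) < Real.exp r := Real.exp_pos r
      nlinarith
    have hc1 : r0 * Real.exp r0 ≤ (⌈r0 * Real.exp r0⌉₊ : ℝ) := Nat.le_ceil _
    have hc2 : ((⌈r0 * Real.exp r0⌉₊ : ℕ) : ℝ) ≤ (n:ℝ) := by
      exact_mod_cast le_trans (le_max_right 1 _) hn
    rw [hrn] at hlt
    linarith
  obtain ⟨bigeps, h12, h15⟩ := hr0 r hrr0
  have hr1 : 1 ≤ r := hr01.trans hrr0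
  have hbigs := bigs ((1+ε) * Real.log (1+ε) - ε) B r hr1 hApos hBpos h12 h15
  have hdiv : (n:ℝ) / r = Real.exp r := by
    rw [← hrn, mul_comm, mul_div_assoc, div_self (ne_of_gt hrpos), mul_one]
  rw [hdiv]
  set m := ⌈Real.exp r⌉₊ with hmdef
  have hb1 : Real.log (Real.exp r + 1) + Real.log (2*((n:ℝ)+1))
      ≤ ((1+ε) * Real.log (1+ε) - ε) * Real.exp r := by
    have h := hbigs.1
    rw [hrn] at h
    exact h
  have hb2 : ε < 1 → Real.log (Real.exp r + 1) + Real.log (Real.exp r + 2)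
      + Real.log (2*((n:ℝ)+1)) ≤ (ε + (1-ε) * Real.log (1-ε)) * Real.exp r := by
    intro hε1
    have h := hbigs.2
    rw [hrn, hBdef, if_pos hε1] at h
    exact h
  have hbellpos : (0:ℝ) < (bell n : ℝ) := by exact_mod_cast bell_pos n
  have hfm : (0:ℝ) < (Nat.factorial m : ℝ) := by exact_mod_cast Nat.factorial_pos m
  have hlam1 : (1:ℝ) ≤ Real.exp r := by
    rw [← Real.exp_zero]; exact Real.exp_le_exp.2 (by linarith)
  have hmlam : Real.exp r ≤ (m:ℝ) := by rw [hmdef]; exact Nat.le_ceil _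
  have hm0 : (0:ℝ) < (m:ℝ) := by linarith
  have hbell_ge : (m:ℝ)^n / (Nat.factorial m : ℝ) ≤ (bell n : ℝ) := by
    rw [div_le_iff₀ hfm]
    exact_mod_cast pow_le_bell_mul_factorial n m
  have hEpos : (0:ℝ) < Real.exp (-((n:ℝ)*(ε - Real.log (1+ε)))) := Real.exp_pos _
  have hEfrac : (0:ℝ) ≤ Real.exp (-((n:ℝ)*(ε - Real.log (1+ε)))) / (2*((n:ℝ)+1)) := by
    positivity
  have hcount := card_subtype_le_sum n (fun k => ε * Real.exp r ≤ |(k:ℝ) - Real.exp r|)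
  have hsum : (Nat.card {π : Finpartition (univ : Finset (Fin n)) //
        ε * Real.exp r ≤ |(π.parts.card : ℝ) - Real.exp r|} : ℝ)
      ≤ ((∑ k ∈ Finset.range (n + 1),
          if ε * Real.exp r ≤ |(k:ℝ) - Real.exp r| then
            Nat.card {π : Finpartition (univ : Finset (Fin n)) // π.parts.card = k} else 0 : ℕ)
          : ℝ) := by
    exact_mod_cast hcount
  rw [Nat.cast_sum] at hsum
  have hterm : ∀ k ∈ Finset.range (n+1),
      ((if ε * Real.exp r ≤ |(k:ℝ) - Real.exp r| then
          Nat.card {π : Finpartition (univ : Finset (Fin n)) // π.parts.card = k} else 0 : ℕ) : ℝ)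
      ≤ Real.exp (-((n:ℝ)*(ε - Real.log (1+ε)))) / (2*((n:ℝ)+1)) * (bell n : ℝ) := by
    intro k _
    by_cases hQ : ε * Real.exp r ≤ |(k:ℝ) - Real.exp r|
    · rw [if_pos hQ]
      rcases Nat.eq_zero_or_pos k with rfl | hk1
      · rw [card_parts_zero n hn1]
        simp only [Nat.cast_zero]
        exact mul_nonneg hEfrac hbellpos.le
      · have hfk : (0:ℝ) < (Nat.factorial k : ℝ) := by exact_mod_cast Nat.factorial_pos k
        have hSk : (Nat.card {π : Finpartition (univ : Finset (Fin n)) // π.parts.card = k} : ℝ)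
            ≤ (k:ℝ)^n / (Nat.factorial k : ℝ) := by
          rw [le_div_iff₀ hfk]
          exact_mod_cast card_parts_mul_factorial_le n k
        have hk0 : (0:ℝ) < (k:ℝ) := by exact_mod_cast hk1
        have hperk := perk n k m r ε hε hr1 hrn hmdef hk1 hQ bigeps hb1 hb2
        calc (Nat.card {π : Finpartition (univ : Finset (Fin n)) // π.parts.card = k} : ℝ)
            ≤ (k:ℝ)^n / (Nat.factorial k : ℝ) := hSk
          _ = ((k:ℝ)^n / (Nat.factorial k : ℝ) * ((Nat.factorial m : ℝ) / (m:ℝ)^n))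
              * ((m:ℝ)^n / (Nat.factorial m : ℝ)) := by
              field_simp
          _ ≤ Real.exp (-((n:ℝ)*(ε - Real.log (1+ε)))) / (2*((n:ℝ)+1))
              * ((m:ℝ)^n / (Nat.factorial m : ℝ)) := by
              apply mul_le_mul_of_nonneg_right hperk (by positivity)
          _ ≤ Real.exp (-((n:ℝ)*(ε - Real.log (1+ε)))) / (2*((n:ℝ)+1)) * (bell n : ℝ) := by
              apply mul_le_mul_of_nonneg_left hbell_ge hEfrac
    · rw [if_neg hQ]
      simp only [Nat.cast_zero]
      exact mul_nonneg hEfrac hbellpos.le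
  have hsum2 := Finset.sum_le_card_nsmul (Finset.range (n+1)) _ _ hterm
  rw [Finset.card_range, nsmul_eq_mul] at hsum2
  have hns : ((n+1 : ℕ) : ℝ) * (Real.exp (-((n:ℝ)*(ε - Real.log (1+ε)))) / (2*((n:ℝ)+1))
      * (bell n : ℝ)) = Real.exp (-((n:ℝ)*(ε - Real.log (1+ε)))) / 2 * (bell n : ℝ) := by
    have hne : ((n:ℝ)+1) ≠ 0 := by positivity
    push_cast
    field_simp
  rw [hns] at hsum2
  rw [div_lt_iff₀ hbellpos]
  calc (Nat.card {π : Finpartition (univ : Finset (Fin n)) //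
        ε * Real.exp r ≤ |(π.parts.card : ℝ) - Real.exp r|} : ℝ)
      ≤ Real.exp (-((n:ℝ)*(ε - Real.log (1+ε)))) / 2 * (bell n : ℝ) :=
        le_trans hsum hsum2
    _ < (n:ℝ) * Real.exp (-((n:ℝ)*(ε - Real.log (1+ε)))) * (bell n : ℝ) := by
        nlinarith [hEpos, hbellpos, hn1']
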